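/- For 1 < p < n+1 and p' = n−p+2, the operator C_n satisfies C_n^{p'}·Z₁·C_n^{−p'} = Z_{n−p+1}·X_{n−p+2}, i.e., repeated application of C_n propagates a Z on the first qubit to a nearest-neighbour Z⊗X pair at position n−p+1, n−p+2. -/

import Mathlib

open Matrix Kronecker

noncomputable section

/-- Pauli X -/
def PX : Matrix (Fin 2) (Fin 2) ℂ := !![0, 1; 1, 0]
/-- Pauli Z -/
def PZ : Matrix (Fin 2) (Fin 2) ℂ := !![1, 0; 0, -1]
/-- Hadamard -/
def Hg : Matrix (Fin 2) (Fin 2) ℂ := (((Real.sqrt 2 : ℝ) : ℂ))⁻¹ • !![1, 1; 1, -1]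
/-- Controlled-Z: |0⟩⟨0|⊗I + |1⟩⟨1|⊗Z -/
def CZ : Matrix (Fin 2 × Fin 2) (Fin 2 × Fin 2) ℂ :=
  (Matrix.single 0 0 1) ⊗ₖ (1 : Matrix (Fin 2) (Fin 2) ℂ)
    + (Matrix.single 1 1 1) ⊗ₖ PZ
/-- CNOT: |0⟩⟨0|⊗I + |1⟩⟨1|⊗X -/
def CNOT : Matrix (Fin 2 × Fin 2) (Fin 2 × Fin 2) ℂ :=
  (Matrix.single 0 0 1) ⊗ₖ (1 : Matrix (Fin 2) (Fin 2) ℂ)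
    + (Matrix.single 1 1 1) ⊗ₖ PX
/-- R_Z(θ) = exp(-i(θ/2)Z) -/
def RZ (θ : ℝ) : Matrix (Fin 2) (Fin 2) ℂ :=
  NormedSpace.exp ((((-θ/2 : ℝ) : ℂ) * Complex.I) • PZ)
/-- R_X(θ) = exp(-i(θ/2)X) -/
def RX (θ : ℝ) : Matrix (Fin 2) (Fin 2) ℂ :=
  NormedSpace.exp ((((-θ/2 : ℝ) : ℂ) * Complex.I) • PX)
/-- R_{ZX}(α) = exp(-i(α/2) Z⊗X) -/
def RZX (α : ℝ) : Matrix (Fin 2 × Fin 2) (Fin 2 × Fin 2) ℂ :=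
  NormedSpace.exp ((((-α/2 : ℝ) : ℂ) * Complex.I) • (PZ ⊗ₖ PX))
/-- |+⟩ -/
def ketPlus : Fin 2 → ℂ := (((Real.sqrt 2 : ℝ) : ℂ))⁻¹ • (fun _ : Fin 2 => (1 : ℂ))
/-- |−⟩ -/
def ketMinus : Fin 2 → ℂ :=
  (((Real.sqrt 2 : ℝ) : ℂ))⁻¹ • (fun j : Fin 2 => if j = 0 then (1 : ℂ) else -1)
/-- Tensor product of single-qubit vectors -/
def tens (u v : Fin 2 → ℂ) : Fin 2 × Fin 2 → ℂ := fun p => u p.1 * v p.2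
/-- C₂ = (H⊗H)·CZ -/
def C2 : Matrix (Fin 2 × Fin 2) (Fin 2 × Fin 2) ℂ := (Hg ⊗ₖ Hg) * CZ

/-- Single-qubit operator `A` acting on qubit `i` of `n` qubits (identity elsewhere). -/
def op {n : ℕ} (i : Fin n) (A : Matrix (Fin 2) (Fin 2) ℂ) :
    Matrix (Fin n → Fin 2) (Fin n → Fin 2) ℂ :=
  fun f g => ∏ j, if j = i then A (f j) (g j) else if f j = g j then 1 else 0

/-- ⊗_i H_i on n qubits. -/
def Hall (n : ℕ) : Matrix (Fin n → Fin 2) (Fin n → Fin 2) ℂ :=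
  fun f g => ∏ j, Hg (f j) (g j)

/-- ∏_{i=1}^{n-1} CZ_{i,i+1} on n qubits (a diagonal matrix). -/
def CZall (n : ℕ) : Matrix (Fin n → Fin 2) (Fin n → Fin 2) ℂ :=
  Matrix.diagonal fun f => ∏ j : Fin n,
    if h : (j : ℕ) + 1 < n then
      (if f j = 1 ∧ f ⟨(j : ℕ) + 1, h⟩ = 1 then (-1 : ℂ) else 1)
    else 1

/-- C_n = (⊗_i H_i)·(∏_i CZ_{i,i+1}) -/
def Cn (n : ℕ) : Matrix (Fin n → Fin 2) (Fin n → Fin 2) ℂ := Hall n * CZall n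

section Aux
def kq {n : ℕ} (M : Fin n → Matrix (Fin 2) (Fin 2) ℂ) :
    Matrix (Fin n → Fin 2) (Fin n → Fin 2) ℂ :=
  fun f g => ∏ j, M j (f j) (g j)

variable {n : ℕ}

lemma kq_apply (M : Fin n → Matrix (Fin 2) (Fin 2) ℂ) (f g : Fin n → Fin 2) :
    kq M f g = ∏ j, M j (f j) (g j) := rfl

lemma kq_mul (M N : Fin n → Matrix (Fin 2) (Fin 2) ℂ) :
    kq M * kq N = kq (fun j => M j * N j) := by
  ext f g
  rw [Matrix.mul_apply, kq_apply]
  simp_rw [kq_apply, Matrix.mul_apply, ← Finset.prod_mul_distrib,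
    Finset.prod_univ_sum, Fintype.piFinset_univ]

lemma kq_one : kq (fun _ : Fin n => (1 : Matrix (Fin 2) (Fin 2) ℂ)) = 1 := by
  ext f g
  by_cases h : f = g
  · subst h; simp [kq_apply, Matrix.one_apply]
  · obtain ⟨j, hj⟩ := Function.ne_iff.mp h
    rw [kq_apply, Finset.prod_eq_zero (Finset.mem_univ j) (by simp [Matrix.one_apply, hj]),
      Matrix.one_apply_ne h]

lemma op_eq_kq (i : Fin n) (A : Matrix (Fin 2) (Fin 2) ℂ) :
    op i A = kq (fun j => if j = i then A else 1) := by
  ext f g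
  refine Finset.prod_congr rfl fun j _ => ?_
  by_cases hj : j = i <;> simp [hj, Matrix.one_apply]

lemma op_mul_same (i : Fin n) (A B : Matrix (Fin 2) (Fin 2) ℂ) :
    op i A * op i B = op i (A * B) := by
  rw [op_eq_kq, op_eq_kq, op_eq_kq, kq_mul]
  refine congrArg kq ?_
  funext j
  by_cases hj : j = i <;> simp [hj]

lemma op_comm (i l : Fin n) (hil : i ≠ l) (A B : Matrix (Fin 2) (Fin 2) ℂ) :
    op i A * op l B = op l B * op i A := by
  rw [op_eq_kq i, op_eq_kq l, kq_mul, kq_mul]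
  refine congrArg kq ?_
  funext j
  by_cases hj : j = i <;> by_cases hj' : j = l <;> simp_all

lemma op_one (i : Fin n) : op i (1 : Matrix (Fin 2) (Fin 2) ℂ) = 1 := by
  rw [op_eq_kq, ← kq_one]
  exact congrArg kq (funext fun j => by split <;> rfl)
lemma PZ_off {x y : Fin 2} (h : x ≠ y) : PZ x y = 0 := by
  fin_cases x <;> fin_cases y <;> simp_all [PZ]

lemma PX_diag (x : Fin 2) : PX x x = 0 := by
  fin_cases x <;> simp [PX]

lemma PX_off {x y : Fin 2} (h : x ≠ y) : PX x y = 1 := by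
  fin_cases x <;> fin_cases y <;> simp_all [PX]

lemma PX_mul_PX : PX * PX = 1 := by
  ext i j; fin_cases i <;> fin_cases j <;>
    simp [PX, Matrix.mul_apply, Fin.sum_univ_two, Matrix.one_apply]

lemma HZ : Hg * PZ = PX * Hg := by
  unfold Hg
  rw [smul_mul_assoc, mul_smul_comm]
  congr 1
  ext i j; fin_cases i <;> fin_cases j <;>
    simp [PX, PZ, Matrix.mul_apply, Fin.sum_univ_two]

lemma HX : Hg * PX = PZ * Hg := by
  unfold Hg
  rw [smul_mul_assoc, mul_smul_comm]
  congr 1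
  ext i j; fin_cases i <;> fin_cases j <;>
    simp [PX, PZ, Matrix.mul_apply, Fin.sum_univ_two]

lemma Hg_mul_Hg : Hg * Hg = 1 := by
  unfold Hg
  rw [smul_mul_assoc, mul_smul_comm, smul_smul]
  have h2 : ((Real.sqrt 2 : ℝ) : ℂ)⁻¹ * ((Real.sqrt 2 : ℝ) : ℂ)⁻¹ = (2 : ℂ)⁻¹ := by
    rw [← mul_inv, ← Complex.ofReal_mul, Real.mul_self_sqrt (by norm_num)]
    norm_num
  rw [h2]
  ext i j
  fin_cases i <;> fin_cases j <;>
    simp [Matrix.mul_apply, Fin.sum_univ_two, Matrix.one_apply] <;> norm_num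


def czsgn {n : ℕ} (j : Fin n) (f : Fin n → Fin 2) : ℂ :=
  if h : (j : ℕ) + 1 < n then
    (if f j = 1 ∧ f ⟨(j : ℕ) + 1, h⟩ = 1 then (-1 : ℂ) else 1)
  else 1

def dsign {n : ℕ} (f : Fin n → Fin 2) : ℂ := ∏ j, czsgn j f

lemma CZall_eq : CZall n = Matrix.diagonal (dsign (n := n)) := rfl

lemma czsgn_eq (j j' : Fin n) (h : (j : ℕ) + 1 = (j' : ℕ)) (f : Fin n → Fin 2) :
    czsgn j f = if f j = 1 ∧ f j' = 1 then -1 else 1 := by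
  have hlt : (j : ℕ) + 1 < n := h ▸ j'.isLt
  have hj' : (⟨(j : ℕ) + 1, hlt⟩ : Fin n) = j' := Fin.ext h
  rw [czsgn, dif_pos hlt, hj']

lemma czsgn_last (j : Fin n) (h : ¬ ((j : ℕ) + 1 < n)) (f : Fin n → Fin 2) :
    czsgn j f = 1 := dif_neg h

lemma czsgn_sq (j : Fin n) (f : Fin n → Fin 2) : czsgn j f * czsgn j f = 1 := by
  unfold czsgn; split_ifs <;> norm_num

lemma dsign_sq (f : Fin n → Fin 2) : dsign f * dsign f = 1 := by
  rw [dsign, ← Finset.prod_mul_distrib]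
  exact Finset.prod_eq_one fun j _ => czsgn_sq j f

lemma opPZ_diag (i : Fin n) :
    op i PZ = Matrix.diagonal (fun f => PZ (f i) (f i)) := by
  ext f g
  by_cases h : f = g
  · subst h
    rw [Matrix.diagonal_apply_eq, op]
    have h1 : (∏ j, if j = i then PZ (f j) (f j) else if f j = f j then (1:ℂ) else 0)
        = ∏ j, if j = i then PZ (f j) (f j) else 1 :=
      Finset.prod_congr rfl fun j _ => by by_cases hj : j = i <;> simp [hj]
    rw [h1, Finset.prod_ite_eq' Finset.univ i (fun j => PZ (f j) (f j))]
    simp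
  · obtain ⟨j, hj⟩ := Function.ne_iff.mp h
    rw [Matrix.diagonal_apply_ne _ h, op,
      Finset.prod_eq_zero (Finset.mem_univ j)]
    by_cases hji : j = i <;> simp [hji, PZ_off, hj]
    exact PZ_off (hji ▸ hj)

lemma DZ_comm (i : Fin n) : CZall n * op i PZ = op i PZ * CZall n := by
  rw [CZall_eq, opPZ_diag, Matrix.diagonal_mul_diagonal, Matrix.diagonal_mul_diagonal]
  exact congrArg _ (funext fun f => mul_comm _ _)

lemma CZall_sq : CZall n * CZall n = 1 := by
  rw [CZall_eq, Matrix.diagonal_mul_diagonal, ← Matrix.diagonal_one]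
  exact congrArg _ (funext fun f => dsign_sq f)

lemma sign1 (x y z : Fin 2) (h : y ≠ z) :
    (if x = 1 ∧ y = 1 then (-1 : ℂ) else 1) * (if x = 1 ∧ z = 1 then (-1 : ℂ) else 1)
      = PZ x x := by
  fin_cases x <;> fin_cases y <;> fin_cases z <;> simp_all [PZ]

lemma sign2 (x y z : Fin 2) (h : x ≠ y) :
    (if x = 1 ∧ z = 1 then (-1 : ℂ) else 1) * (if y = 1 ∧ z = 1 then (-1 : ℂ) else 1)
      = PZ z z := by
  fin_cases x <;> fin_cases y <;> fin_cases z <;> simp_all [PZ]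

lemma prod_two_point {α : Type*} [Fintype α] [DecidableEq α] (a i : α) (hai : a ≠ i)
    (u v : ℂ) : (∏ j, if j = a then u else if j = i then v else 1) = u * v := by
  have h : (fun j => if j = a then u else if j = i then v else 1)
      = fun j => (if j = a then u else 1) * (if j = i then v else 1) := by
    funext j
    by_cases h1 : j = a <;> by_cases h2 : j = i <;> simp_all
  rw [h, Finset.prod_mul_distrib, Finset.prod_ite_eq' Finset.univ a (fun _ => u),
    Finset.prod_ite_eq' Finset.univ i (fun _ => v)]
  simp

lemma prod_one_point {α : Type*} [Fintype α] [DecidableEq α] (a : α) (u : ℂ) :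
    (∏ j, if j = a then u else 1) = u := by
  rw [Finset.prod_ite_eq' Finset.univ a (fun _ => u)]
  simp

lemma DXint (a i b : Fin n) (ha : (a : ℕ) + 1 = (i : ℕ)) (hb : (i : ℕ) + 1 = (b : ℕ)) :
    CZall n * op i PX = op a PZ * op b PZ * op i PX * CZall n := by
  have hai : a ≠ i := fun h => by rw [h] at ha; omega
  have hbi : b ≠ i := fun h => by rw [h] at hb; omega
  have hab : a ≠ b := fun h => by rw [h] at ha; omega
  have hG : op a PZ * op b PZ * op i PX =
      kq (fun j => if j = a then PZ else if j = b then PZ else if j = i then PX else 1) := by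
    rw [op_eq_kq, op_eq_kq, op_eq_kq, kq_mul, kq_mul]
    refine congrArg kq ?_
    funext j
    by_cases h1 : j = a <;> by_cases h2 : j = b <;> by_cases h3 : j = i <;> simp_all
  rw [hG, CZall_eq, op_eq_kq]
  ext f g
  rw [Matrix.diagonal_mul, Matrix.mul_diagonal, kq_apply, kq_apply]
  by_cases hof : ∀ j, j ≠ i → f j = g j
  · by_cases hii : f i = g i
    · rw [Finset.prod_eq_zero (Finset.mem_univ i)
          (show (if i = i then PX else 1) (f i) (g i) = 0 by
            rw [if_pos rfl, hii]; exact PX_diag (g i)),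
        Finset.prod_eq_zero (Finset.mem_univ i)
          (show (if i = a then PZ else if i = b then PZ else if i = i then PX else 1)
              (f i) (g i) = 0 by
            rw [if_neg hai.symm, if_neg hbi.symm, if_pos rfl, hii]; exact PX_diag (g i)),
        mul_zero, zero_mul]
    · have hL : (∏ j, (if j = i then PX else 1) (f j) (g j)) = 1 :=
        Finset.prod_eq_one fun j _ => by
          by_cases hj : j = i
          · subst hj; rw [if_pos rfl]; exact PX_off hii
          · rw [if_neg hj, Matrix.one_apply, if_pos (hof j hj)]
      have key : dsign f * dsign g = PZ (f a) (f a) * PZ (f b) (f b) := by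
        rw [dsign, dsign, ← Finset.prod_mul_distrib]
        have hpt : ∀ j ∈ Finset.univ, czsgn j f * czsgn j g =
            (if j = a then PZ (f a) (f a) else if j = i then PZ (f b) (f b) else 1) := by
          intro j _
          by_cases h1 : j = a
          · subst h1
            rw [if_pos rfl, czsgn_eq j i ha f, czsgn_eq j i ha g, ← hof j hai]
            exact sign1 (f j) (f i) (g i) hii
          · by_cases h2 : j = i
            · subst h2
              rw [if_neg h1, if_pos rfl, czsgn_eq j b hb f, czsgn_eq j b hb g,
                ← hof b hbi]
              exact sign2 (f j) (g j) (f b) hii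
            · rw [if_neg h1, if_neg h2]
              by_cases hlt : (j : ℕ) + 1 < n
              · have hne : (⟨(j : ℕ) + 1, hlt⟩ : Fin n) ≠ i := by
                  intro hh
                  have h' : (j : ℕ) + 1 = (i : ℕ) := congrArg Fin.val hh
                  exact h1 (Fin.ext (by omega))
                rw [czsgn_eq j ⟨(j : ℕ) + 1, hlt⟩ rfl f,
                  czsgn_eq j ⟨(j : ℕ) + 1, hlt⟩ rfl g, ← hof j h2, ← hof _ hne]
                split <;> norm_num
              · rw [czsgn_last j hlt, czsgn_last j hlt, one_mul]
        rw [Finset.prod_congr rfl hpt, prod_two_point a i hai]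
      have hGv : (∏ j, (if j = a then PZ else if j = b then PZ else if j = i then PX else 1)
          (f j) (g j)) = PZ (f a) (f a) * PZ (f b) (f b) := by
        have hpt : ∀ j ∈ Finset.univ,
            (if j = a then PZ else if j = b then PZ else if j = i then PX else 1) (f j) (g j)
              = (if j = a then PZ (f a) (f a) else if j = b then PZ (f b) (f b) else 1) := by
          intro j _
          by_cases h1 : j = a
          · subst h1; rw [if_pos rfl, if_pos rfl, ← hof j hai]
          · by_cases h2 : j = b
            · subst h2
              rw [if_neg h1, if_neg h1, if_pos rfl, if_pos rfl, ← hof j hbi]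
            · by_cases h3 : j = i
              · subst h3
                rw [if_neg h1, if_neg h2, if_pos rfl, if_neg h1, if_neg h2]
                exact PX_off hii
              · rw [if_neg h1, if_neg h2, if_neg h3, if_neg h1, if_neg h2,
                  Matrix.one_apply, if_pos (hof j h3)]
        rw [Finset.prod_congr rfl hpt, prod_two_point a b hab]
      rw [hL, hGv, mul_one]
      calc dsign f = dsign f * (dsign g * dsign g) := by rw [dsign_sq, mul_one]
        _ = (dsign f * dsign g) * dsign g := by ring
        _ = PZ (f a) (f a) * PZ (f b) (f b) * dsign g := by rw [key]
  · push_neg at hof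
    obtain ⟨j, hji, hfg⟩ := hof
    rw [Finset.prod_eq_zero (Finset.mem_univ j)
        (show (if j = i then PX else 1) (f j) (g j) = 0 by
          rw [if_neg hji, Matrix.one_apply, if_neg hfg]),
      Finset.prod_eq_zero (Finset.mem_univ j)
        (show (if j = a then PZ else if j = b then PZ else if j = i then PX else 1)
            (f j) (g j) = 0 by
          by_cases h1 : j = a
          · rw [if_pos h1]; exact PZ_off hfg
          · by_cases h2 : j = b
            · rw [if_neg h1, if_pos h2]; exact PZ_off hfg
            · rw [if_neg h1, if_neg h2, if_neg hji]; exact Matrix.one_apply_ne hfg),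
      mul_zero, zero_mul]

lemma DX0 (i b : Fin n) (hi : (i : ℕ) = 0) (hb : (i : ℕ) + 1 = (b : ℕ)) :
    CZall n * op i PX = op b PZ * op i PX * CZall n := by
  have hbi : b ≠ i := fun h => by rw [h] at hb; omega
  have hG : op b PZ * op i PX =
      kq (fun j => if j = b then PZ else if j = i then PX else 1) := by
    rw [op_eq_kq, op_eq_kq, kq_mul]
    refine congrArg kq ?_
    funext j
    by_cases h2 : j = b <;> by_cases h3 : j = i <;> simp_all
  rw [hG, CZall_eq, op_eq_kq]
  ext f g
  rw [Matrix.diagonal_mul, Matrix.mul_diagonal, kq_apply, kq_apply]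
  by_cases hof : ∀ j, j ≠ i → f j = g j
  · by_cases hii : f i = g i
    · rw [Finset.prod_eq_zero (Finset.mem_univ i)
          (show (if i = i then PX else 1) (f i) (g i) = 0 by
            rw [if_pos rfl, hii]; exact PX_diag (g i)),
        Finset.prod_eq_zero (Finset.mem_univ i)
          (show (if i = b then PZ else if i = i then PX else 1) (f i) (g i) = 0 by
            rw [if_neg hbi.symm, if_pos rfl, hii]; exact PX_diag (g i)),
        mul_zero, zero_mul]
    · have hL : (∏ j, (if j = i then PX else 1) (f j) (g j)) = 1 :=
        Finset.prod_eq_one fun j _ => by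
          by_cases hj : j = i
          · subst hj; rw [if_pos rfl]; exact PX_off hii
          · rw [if_neg hj, Matrix.one_apply, if_pos (hof j hj)]
      have key : dsign f * dsign g = PZ (f b) (f b) := by
        rw [dsign, dsign, ← Finset.prod_mul_distrib]
        have hpt : ∀ j ∈ Finset.univ, czsgn j f * czsgn j g =
            (if j = i then PZ (f b) (f b) else 1) := by
          intro j _
          by_cases h2 : j = i
          · subst h2
            rw [if_pos rfl, czsgn_eq j b hb f, czsgn_eq j b hb g, ← hof b hbi]
            exact sign2 (f j) (g j) (f b) hii
          · rw [if_neg h2]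
            by_cases hlt : (j : ℕ) + 1 < n
            · have hne : (⟨(j : ℕ) + 1, hlt⟩ : Fin n) ≠ i := by
                intro hh
                have h' : (j : ℕ) + 1 = (i : ℕ) := congrArg Fin.val hh
                omega
              rw [czsgn_eq j ⟨(j : ℕ) + 1, hlt⟩ rfl f,
                czsgn_eq j ⟨(j : ℕ) + 1, hlt⟩ rfl g, ← hof j h2, ← hof _ hne]
              split <;> norm_num
            · rw [czsgn_last j hlt, czsgn_last j hlt, one_mul]
        rw [Finset.prod_congr rfl hpt, prod_one_point i]
      have hGv : (∏ j, (if j = b then PZ else if j = i then PX else 1) (f j) (g j))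
          = PZ (f b) (f b) := by
        have hpt : ∀ j ∈ Finset.univ,
            (if j = b then PZ else if j = i then PX else 1) (f j) (g j)
              = (if j = b then PZ (f b) (f b) else 1) := by
          intro j _
          by_cases h2 : j = b
          · subst h2; rw [if_pos rfl, if_pos rfl, ← hof j hbi]
          · by_cases h3 : j = i
            · subst h3
              rw [if_neg h2, if_pos rfl, if_neg h2]
              exact PX_off hii
            · rw [if_neg h2, if_neg h3, if_neg h2, Matrix.one_apply, if_pos (hof j h3)]
        rw [Finset.prod_congr rfl hpt, prod_one_point b]
      rw [hL, hGv, mul_one]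
      calc dsign f = dsign f * (dsign g * dsign g) := by rw [dsign_sq, mul_one]
        _ = (dsign f * dsign g) * dsign g := by ring
        _ = PZ (f b) (f b) * dsign g := by rw [key]
  · push_neg at hof
    obtain ⟨j, hji, hfg⟩ := hof
    rw [Finset.prod_eq_zero (Finset.mem_univ j)
        (show (if j = i then PX else 1) (f j) (g j) = 0 by
          rw [if_neg hji, Matrix.one_apply, if_neg hfg]),
      Finset.prod_eq_zero (Finset.mem_univ j)
        (show (if j = b then PZ else if j = i then PX else 1) (f j) (g j) = 0 by
          by_cases h2 : j = b
          · rw [if_pos h2]; exact PZ_off hfg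
          · rw [if_neg h2, if_neg hji]; exact Matrix.one_apply_ne hfg),
      mul_zero, zero_mul]

lemma Hall_eq : Hall n = kq (fun _ => Hg) := rfl

lemma Hall_swap {A B : Matrix (Fin 2) (Fin 2) ℂ} (h : Hg * A = B * Hg) (i : Fin n) :
    Hall n * op i A = op i B * Hall n := by
  rw [Hall_eq, op_eq_kq, op_eq_kq, kq_mul, kq_mul]
  refine congrArg kq ?_
  funext j
  by_cases hj : j = i <;> simp [hj, h]

lemma Hall_sq : Hall n * Hall n = 1 := by
  rw [Hall_eq, kq_mul, ← kq_one]
  exact congrArg kq (funext fun _ => Hg_mul_Hg)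


lemma SZ (i : Fin n) : Cn n * op i PZ = op i PX * Cn n := by
  show Hall n * CZall n * op i PZ = op i PX * (Hall n * CZall n)
  rw [mul_assoc, DZ_comm, ← mul_assoc, Hall_swap HZ, mul_assoc]

lemma SX0 (i b : Fin n) (hi : (i : ℕ) = 0) (hb : (i : ℕ) + 1 = (b : ℕ)) :
    Cn n * op i PX = op i PZ * op b PX * Cn n := by
  have hbi : b ≠ i := fun h => by rw [h] at hb; omega
  show Hall n * CZall n * op i PX = op i PZ * op b PX * (Hall n * CZall n)
  rw [mul_assoc, DX0 i b hi hb]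
  simp only [mul_assoc]
  rw [← mul_assoc (Hall n) (op b PZ), Hall_swap HZ b]
  simp only [mul_assoc]
  rw [← mul_assoc (Hall n) (op i PX), Hall_swap HX i]
  simp only [mul_assoc]
  rw [← mul_assoc (op b PX) (op i PZ), op_comm b i hbi PX PZ]
  simp only [mul_assoc]

lemma SXint (a i b : Fin n) (ha : (a : ℕ) + 1 = (i : ℕ)) (hb : (i : ℕ) + 1 = (b : ℕ)) :
    Cn n * op i PX = op a PX * op i PZ * op b PX * Cn n := by
  have hbi : b ≠ i := fun h => by rw [h] at hb; omega
  show Hall n * CZall n * op i PX = op a PX * op i PZ * op b PX * (Hall n * CZall n)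
  rw [mul_assoc, DXint a i b ha hb]
  simp only [mul_assoc]
  rw [← mul_assoc (Hall n) (op a PZ), Hall_swap HZ a]
  simp only [mul_assoc]
  rw [← mul_assoc (Hall n) (op b PZ), Hall_swap HZ b]
  simp only [mul_assoc]
  rw [← mul_assoc (Hall n) (op i PX), Hall_swap HX i]
  simp only [mul_assoc]
  rw [← mul_assoc (op b PX) (op i PZ), op_comm b i hbi PX PZ]
  simp only [mul_assoc]


lemma main_step (hn : 2 ≤ n) (k : ℕ) (hk2 : 2 ≤ k) : k ≤ n → ∀ (z a b : Fin n),
    (z : ℕ) = 0 → (a : ℕ) = k - 2 → (b : ℕ) = k - 1 →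
    Cn n ^ k * op z PZ = op a PZ * op b PX * Cn n ^ k := by
  induction k, hk2 using Nat.le_induction with
  | base =>
    intro hkn z a b hz hav hbv
    have hza : a = z := Fin.ext (by omega)
    subst hza
    rw [pow_two]
    simp only [mul_assoc]
    rw [SZ a, ← mul_assoc, SX0 a b hz (by omega)]
    simp only [mul_assoc]
  | succ k hk ih =>
    intro hkn z a b hz hav hbv
    obtain ⟨c, hcv⟩ : ∃ c : Fin n, (c : ℕ) = k - 2 := ⟨⟨k - 2, by omega⟩, rfl⟩
    have IH := ih (by omega) z c a hz hcv (by omega)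
    rw [pow_succ']
    simp only [mul_assoc]
    rw [IH]
    simp only [mul_assoc]
    have h1 : ∀ R, Cn n * (op c PZ * R) = op c PX * (Cn n * R) := fun R => by
      rw [← mul_assoc, SZ, mul_assoc]
    have h2 : ∀ R, Cn n * (op a PX * R)
        = op c PX * (op a PZ * (op b PX * (Cn n * R))) := fun R => by
      rw [← mul_assoc, SXint c a b (by omega) (by omega)]
      simp only [mul_assoc]
    have h3 : ∀ R, op c PX * (op c PX * R) = R := fun R => by
      rw [← mul_assoc, op_mul_same, PX_mul_PX, op_one, one_mul]
    rw [h1, h2, h3]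

lemma CnB : Cn n * (CZall n * Hall n) = 1 := by
  show Hall n * CZall n * (CZall n * Hall n) = 1
  rw [mul_assoc, ← mul_assoc (CZall n) (CZall n), CZall_sq, one_mul, Hall_sq]

lemma BCn : (CZall n * Hall n) * Cn n = 1 := by
  show CZall n * Hall n * (Hall n * CZall n) = 1
  rw [mul_assoc, ← mul_assoc (Hall n) (Hall n), Hall_sq, one_mul, CZall_sq]

lemma pow_pair {M : Type*} [Monoid M] {x y : M} (h1 : x * y = 1) (h2 : y * x = 1) :
    ∀ k : ℕ, x ^ k * y ^ k = 1 := by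
  intro k
  induction k with
  | zero => simp
  | succ k ih =>
    rw [pow_succ' x k, pow_succ y k, mul_assoc, ← mul_assoc (x ^ k), ih, one_mul, h1]


end Aux

theorem cn_propagate_z (n p : ℕ) (hn : 2 ≤ n) (hp1 : 1 < p) (hp2 : p < n + 1) :
    Cn n ^ (n - p + 2) * op (⟨0, by omega⟩ : Fin n) PZ * (Cn n ^ (n - p + 2))⁻¹
      = op (⟨n - p, by omega⟩ : Fin n) PZ * op (⟨n - p + 1, by omega⟩ : Fin n) PX := by
  have h0 : 0 < n := by omega
  have hA : n - p < n := by omega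
  have hB : n - p + 1 < n := by omega
  show Cn n ^ (n - p + 2) * op (⟨0, h0⟩ : Fin n) PZ * (Cn n ^ (n - p + 2))⁻¹
      = op (⟨n - p, hA⟩ : Fin n) PZ * op (⟨n - p + 1, hB⟩ : Fin n) PX
  have hpow : Cn n ^ (n - p + 2) * (CZall n * Hall n) ^ (n - p + 2) = 1 :=
    pow_pair CnB BCn _
  have hinv : (Cn n ^ (n - p + 2))⁻¹ = (CZall n * Hall n) ^ (n - p + 2) :=
    Matrix.inv_eq_right_inv hpow
  have ME := main_step hn (n - p + 2) (by omega) (by omega)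
    (⟨0, h0⟩ : Fin n) (⟨n - p, hA⟩ : Fin n) (⟨n - p + 1, hB⟩ : Fin n)
    rfl (by show n - p = n - p + 2 - 2; omega) (by show n - p + 1 = n - p + 2 - 1; omega)
  rw [ME, hinv, mul_assoc, hpow, mul_one]
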